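/- arXiv:2604.12120 — 2 statements merged into one kernel-verified Lean document; each statement's English description precedes it below -/
import Mathlib

section
/- Let R be a commutative ring, V an R-module, and let e, y, z be R-linear endomorphisms of V satisfying e∘y − y∘e = z and e∘z = z∘e. Let v, w ∈ V, σ ∈ R, and let k be a natural number such that e^{k+1}(v) = 0 and z(e^k(v)) = σ • w. Then for all natural numbers i and j with i ≥ 1 and i + j = k + 1, one has e^i(y(e^j(v))) = i • (σ • w), where i acts via the natural number scalar action. -/
/-- Abstract content of Lemma A.2: if `e∘y − y∘e = z`, `e∘z = z∘e`,
`e^{k+1} v = 0` and `z (e^k v) = σ • w`, then for `i ≥ 1`, `i + j = k + 1`,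
one has `e^i (y (e^j v)) = i • (σ • w)`. -/
theorem pow_apply_bracket_once {R : Type*} [CommRing R] {V : Type*} [AddCommGroup V]
    [Module R V] (e y z : Module.End R V)
    (hyz : e ∘ₗ y - y ∘ₗ e = z) (hez : e ∘ₗ z = z ∘ₗ e)
    (v w : V) (σ : R) (k : ℕ)
    (hv : (e ^ (k + 1)) v = 0) (hz : z ((e ^ k) v) = σ • w) :
    ∀ i j : ℕ, 1 ≤ i → i + j = k + 1 → (e ^ i) (y ((e ^ j) v)) = i • (σ • w) := by
  have hey : ∀ u : V, e (y u) = y (e u) + z u := by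
    intro u
    have := congrArg (fun f : Module.End R V => f u) hyz
    simp at this
    linear_combination (norm := abel) this
  have hcomm : Commute e z := hez
  intro i
  induction i with
  | zero => intro j h1 _; omega
  | succ i ih =>
    intro j h1 hij
    rcases Nat.eq_zero_or_pos i with hi0 | hi
    · subst hi0
      have hj : j = k := by omega
      subst hj
      have h0 : e ((e ^ j) v) = 0 := by
        have h' : (e ^ (j + 1)) v = e ((e ^ j) v) := by rw [pow_succ']; rfl
        rw [← h', hv]
      rw [pow_one, hey, h0, map_zero, zero_add, hz]; simp
    · have hij' : i + (j + 1) = k + 1 := by omega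
      have key := ih (j + 1) hi hij'
      have hzcomm : (e ^ i) (z ((e ^ j) v)) = σ • w := by
        have hc : e ^ i * z = z * e ^ i := (hcomm.pow_left i).eq
        calc (e ^ i) (z ((e ^ j) v)) = (e ^ i * z) ((e ^ j) v) := rfl
          _ = (z * e ^ i) ((e ^ j) v) := by rw [hc]
          _ = z ((e ^ i * e ^ j) v) := rfl
          _ = z ((e ^ k) v) := by
              have hk : i + j = k := by omega
              rw [← pow_add, hk]
          _ = σ • w := hz
      have hstep : (e ^ (j + 1)) v = e ((e ^ j) v) := by rw [pow_succ']; rfl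
      calc (e ^ (i + 1)) (y ((e ^ j) v))
          = (e ^ i) (e (y ((e ^ j) v))) := by rw [pow_succ]; rfl
        _ = (e ^ i) (y ((e ^ (j + 1)) v)) + (e ^ i) (z ((e ^ j) v)) := by
            rw [hey, hstep, map_add]
        _ = i • (σ • w) + σ • w := by rw [key, hzcomm]
        _ = (i + 1) • (σ • w) := by rw [succ_nsmul]
end

section
/- Let R be a commutative ring, V an R-module, and let e, x, y, z be R-linear endomorphisms of V satisfying e∘x − x∘e = y, e∘y − y∘e = z, and e∘z = z∘e. Let v, w ∈ V, σ ∈ R, and let k be a natural number such that e^{k+1}(v) = 0 and z(e^k(v)) = σ • w. Then for all natural numbers i and j with i ≥ 2 and i + j = k + 2, one has e^i(x(e^j(v))) = (i·(i−1)/2) • (σ • w), where the binomial coefficient i·(i−1)/2 acts via the natural number scalar action. -/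
/-- Abstract content of Lemma A.3: if `e∘x − x∘e = y`, `e∘y − y∘e = z`,
`e∘z = z∘e`, `e^{k+1} v = 0` and `z (e^k v) = σ • w`, then for `i ≥ 2`,
`i + j = k + 2`, one has `e^i (x (e^j v)) = (i·(i−1)/2) • (σ • w)`. -/
theorem pow_apply_bracket_twice {R : Type*} [CommRing R] {V : Type*} [AddCommGroup V]
    [Module R V] (e x y z : Module.End R V)
    (hxy : e ∘ₗ x - x ∘ₗ e = y) (hyz : e ∘ₗ y - y ∘ₗ e = z) (hez : e ∘ₗ z = z ∘ₗ e)
    (v w : V) (σ : R) (k : ℕ)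
    (hv : (e ^ (k + 1)) v = 0) (hz : z ((e ^ k) v) = σ • w) :
    ∀ i j : ℕ, 2 ≤ i → i + j = k + 2 →
      (e ^ i) (x ((e ^ j) v)) = (i * (i - 1) / 2) • (σ • w) := by
  have hex : e * x = x * e + y := by
    have : e * x - x * e = y := hxy
    linear_combination (norm := module) this
  have hey : e * y = y * e + z := by
    have : e * y - y * e = z := hyz
    linear_combination (norm := module) this
  have hez' : Commute e z := hez
  have hv' : ∀ n, k + 1 ≤ n → (e ^ n) v = 0 := by
    intro n hn
    obtain ⟨m, rfl⟩ := Nat.exists_eq_add_of_le hn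
    rw [show k + 1 + m = m + (k + 1) by ring, pow_add, Module.End.mul_apply, hv, map_zero]
  have hZ : ∀ i j : ℕ, i + j = k → (e ^ i) (z ((e ^ j) v)) = σ • w := by
    intro i j hij
    have hc : e ^ i * z = z * e ^ i := (hez'.pow_left i)
    calc (e ^ i) (z ((e ^ j) v)) = (e ^ i * z) ((e ^ j) v) := rfl
      _ = (z * e ^ i) ((e ^ j) v) := by rw [hc]
      _ = z ((e ^ i * e ^ j) v) := rfl
      _ = σ • w := by rw [← pow_add, hij, hz]
  have hY : ∀ i j : ℕ, i + j = k + 1 → (e ^ i) (y ((e ^ j) v)) = i • (σ • w) := by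
    intro i
    induction i with
    | zero =>
      intro j hij
      simp [show j = k + 1 by omega, hv]
    | succ i ih =>
      intro j hij
      have h1 : (e ^ (i + 1)) (y ((e ^ j) v)) =
          (e ^ i) ((e * y) ((e ^ j) v)) := by
        calc (e ^ (i + 1)) (y ((e ^ j) v)) = (e ^ i * e) (y ((e ^ j) v)) := by
              rw [pow_succ]
          _ = (e ^ i) ((e * y) ((e ^ j) v)) := rfl
      rw [h1, hey]
      simp only [LinearMap.add_apply, Module.End.mul_apply, map_add]
      have h2 : (e ^ i) (y (e ((e ^ j) v))) = i • (σ • w) := by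
        have : e ((e ^ j) v) = (e ^ (j + 1)) v := by
          rw [pow_succ', Module.End.mul_apply]
        rw [this]; exact ih (j + 1) (by omega)
      have h3 : (e ^ i) (z ((e ^ j) v)) = σ • w := hZ i j (by omega)
      rw [h2, h3, succ_nsmul]
  have hX : ∀ i j : ℕ, i + j = k + 2 →
      (e ^ i) (x ((e ^ j) v)) = Nat.choose i 2 • (σ • w) := by
    intro i
    induction i with
    | zero =>
      intro j hij
      simp [show j = k + 2 by omega, hv' (k+2) (by omega)]
    | succ i ih =>
      intro j hij
      have h1 : (e ^ (i + 1)) (x ((e ^ j) v)) =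
          (e ^ i) ((e * x) ((e ^ j) v)) := by
        calc (e ^ (i + 1)) (x ((e ^ j) v)) = (e ^ i * e) (x ((e ^ j) v)) := by
              rw [pow_succ]
          _ = (e ^ i) ((e * x) ((e ^ j) v)) := rfl
      rw [h1, hex]
      simp only [LinearMap.add_apply, Module.End.mul_apply, map_add]
      have h2 : (e ^ i) (x (e ((e ^ j) v))) = Nat.choose i 2 • (σ • w) := by
        have : e ((e ^ j) v) = (e ^ (j + 1)) v := by
          rw [pow_succ', Module.End.mul_apply]
        rw [this]; exact ih (j + 1) (by omega)
      have h3 : (e ^ i) (y ((e ^ j) v)) = i • (σ • w) := hY i j (by omega)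
      rw [h2, h3, ← add_nsmul]
      congr 1
      rw [Nat.choose_succ_succ, Nat.choose_one_right, add_comm]
  intro i j _ hij
  rw [hX i j hij, ← Nat.choose_two_right]
end
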